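/- arXiv:1003.2372 — 2 statements merged into one kernel-verified Lean document; each statement's English description precedes it below -/
import Mathlib

section
/- Let A be an n×n Hermitian positive definite matrix and a ∈ ℂⁿ a vector. If the Hermitian matrix a a† − A has a positive eigenvalue, then 0 is not an eigenvalue of a a† − A and all eigenvalues of a a† − A except exactly one are negative; i.e., a a† − A has exactly one positive eigenvalue and n−1 negative eigenvalues. -/
open scoped ComplexOrder
open Matrix

private lemma vecMulVec_mulVec' {n : ℕ} (a b x : Fin n → ℂ) :
    Matrix.vecMulVec a b *ᵥ x = (b ⬝ᵥ x) • a := by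
  funext i
  simp [Matrix.mulVec, Matrix.vecMulVec, dotProduct, Finset.mul_sum, mul_assoc,
    mul_comm, mul_left_comm]

private lemma aux1 {n : ℕ} (A : Matrix (Fin n) (Fin n) ℂ) (hA : A.PosDef)
    (a : Fin n → ℂ)
    (hM : (Matrix.vecMulVec a (star a) - A).IsHermitian)
    {i j : Fin n} (hij : i ≠ j) (hi : 0 < hM.eigenvalues i) (hj : 0 ≤ hM.eigenvalues j) :
    False := by
  set M := Matrix.vecMulVec a (star a) - A with hMdef
  -- negativity of the quadratic form on the kernel of a†
  have hneg : ∀ x : Fin n → ℂ, x ≠ 0 → star a ⬝ᵥ x = 0 →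
      star x ⬝ᵥ (M *ᵥ x) < 0 := by
    intro x hx h0
    have h1 : M *ᵥ x = - (A *ᵥ x) := by
      rw [hMdef, Matrix.sub_mulVec, vecMulVec_mulVec', h0, zero_smul, zero_sub]
    rw [h1, dotProduct_neg, neg_neg_iff_pos]
    exact hA.dotProduct_mulVec_pos hx
  set v : Fin n → ℂ := ⇑(hM.eigenvectorBasis i) with hv
  set w : Fin n → ℂ := ⇑(hM.eigenvectorBasis j) with hw
  have horth := orthonormal_iff_ite.mp hM.eigenvectorBasis.orthonormal
  have hvv : star v ⬝ᵥ v = 1 := by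
    have h := horth i i
    rw [EuclideanSpace.inner_eq_star_dotProduct, dotProduct_comm] at h
    simpa [hv] using h
  have hww : star w ⬝ᵥ w = 1 := by
    have h := horth j j
    rw [EuclideanSpace.inner_eq_star_dotProduct, dotProduct_comm] at h
    simpa [hw] using h
  have hvw : star v ⬝ᵥ w = 0 := by
    have h := horth i j
    rw [EuclideanSpace.inner_eq_star_dotProduct, dotProduct_comm] at h
    simpa [hv, hw, hij] using h
  have hwv : star w ⬝ᵥ v = 0 := by
    have h := horth j i
    rw [EuclideanSpace.inner_eq_star_dotProduct, dotProduct_comm] at h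
    simpa [hv, hw, hij.symm] using h
  have hMv : M *ᵥ v = (hM.eigenvalues i : ℂ) • v := by
    simpa using hM.mulVec_eigenvectorBasis i
  have hMw : M *ᵥ w = (hM.eigenvalues j : ℂ) • w := by
    simpa using hM.mulVec_eigenvectorBasis j
  set α : ℂ := star a ⬝ᵥ v with hα
  set β : ℂ := star a ⬝ᵥ w with hβ
  by_cases hα0 : α = 0
  · -- take x = v
    have hvne : v ≠ 0 := by
      have := hM.eigenvectorBasis.orthonormal.ne_zero i
      intro h; apply this; rw [hv] at h; ext k; simp [h]
    have hlt := hneg v hvne hα0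
    rw [hMv, dotProduct_smul, hvv, smul_eq_mul, mul_one] at hlt
    have h2 : (0:ℂ) < (hM.eigenvalues i : ℂ) := by exact_mod_cast hi
    exact absurd (h2.trans hlt) (lt_irrefl 0)
  · set x : Fin n → ℂ := β • v - α • w with hx
    have hxa : star a ⬝ᵥ x = 0 := by
      rw [hx, dotProduct_sub, dotProduct_smul, dotProduct_smul,
        ← hα, ← hβ]
      ring_nf
    have hxw : star w ⬝ᵥ x = -α := by
      rw [hx, dotProduct_sub, dotProduct_smul, dotProduct_smul,
        hwv, hww]
      simp
    have hxne : x ≠ 0 := by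
      intro h
      rw [h, dotProduct_zero] at hxw
      exact hα0 (by simpa using hxw.symm)
    have hlt := hneg x hxne hxa
    have hMx : M *ᵥ x = (β * hM.eigenvalues i) • v - (α * hM.eigenvalues j) • w := by
      rw [hx, Matrix.mulVec_sub, Matrix.mulVec_smul, Matrix.mulVec_smul, hMv, hMw,
        smul_smul, smul_smul]
    have hq : star x ⬝ᵥ (M *ᵥ x)
        = star β * β * (hM.eigenvalues i : ℂ) + star α * α * (hM.eigenvalues j : ℂ) := by
      rw [hMx, hx, star_sub, star_smul, star_smul, sub_dotProduct,
        smul_dotProduct, smul_dotProduct, dotProduct_sub,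
        dotProduct_sub, dotProduct_smul, dotProduct_smul,
        dotProduct_smul, dotProduct_smul, hvv, hww, hvw, hwv]
      simp only [smul_eq_mul, mul_one, mul_zero, sub_zero, zero_sub]
      ring
    rw [hq] at hlt
    have h1 : (0:ℂ) ≤ star β * β * (hM.eigenvalues i : ℂ) := by
      apply mul_nonneg
      · exact star_mul_self_nonneg β
      · exact_mod_cast hi.le
    have h2 : (0:ℂ) ≤ star α * α * (hM.eigenvalues j : ℂ) := by
      apply mul_nonneg
      · exact star_mul_self_nonneg α
      · exact_mod_cast hj
    exact (add_nonneg h1 h2).not_gt hlt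

theorem stmt1 {n : ℕ} (A : Matrix (Fin n) (Fin n) ℂ) (hA : A.PosDef)
    (a : Fin n → ℂ)
    (hM : (Matrix.vecMulVec a (star a) - A).IsHermitian)
    (hpos : ∃ i, 0 < hM.eigenvalues i) :
    (∃! i, 0 < hM.eigenvalues i) ∧ (∀ i, hM.eigenvalues i ≠ 0) := by
  obtain ⟨i, hi⟩ := hpos
  constructor
  · refine ⟨i, hi, fun j hj => ?_⟩
    by_contra hne
    exact aux1 A hA a hM hne hj hi.le
  · intro j hj0
    by_cases hij : j = i
    · rw [hij] at hj0; exact absurd hi (by rw [hj0]; exact lt_irrefl 0)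
    · exact aux1 A hA a hM (Ne.symm hij) hi hj0.ge
end

section
/- For distinct positive reals a ≠ b, ∫₀^∞ e^{−t}/((1+ta)(1+tb)) dt = (F₁(a) − F₁(b))/(a − b), where F₁(x) = e^{1/x} E₁(1/x) and E₁ is the exponential integral. -/
open Set MeasureTheory Real

/-- The exponential integral `E₁ x = ∫ₓ^∞ e^{-t}/t dt`. -/
noncomputable def expIntE1 (x : ℝ) : ℝ := ∫ t in Set.Ioi x, Real.exp (-t) / t

/-- `F₁ x = e^{1/x} E₁(1/x)`. -/
noncomputable def F1 (x : ℝ) : ℝ := Real.exp (1 / x) * expIntE1 (1 / x)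

lemma integrable_shift (s : ℝ) (hs : 0 < s) :
    IntegrableOn (fun t : ℝ => Real.exp (-t) / (t + s)) (Ioi 0) := by
  have h1 : IntegrableOn (fun t : ℝ => Real.exp (-t) / s) (Ioi 0) := by
    have := (exp_neg_integrableOn_Ioi 0 one_pos).div_const s
    simpa [IntegrableOn] using this
  refine h1.mono' ?_ ?_
  · exact ((measurable_exp.comp measurable_neg).div
      ((measurable_id.add_const s))).aestronglyMeasurable
  · filter_upwards [ae_restrict_mem measurableSet_Ioi] with t ht
    have ht0 : (0:ℝ) < t := ht
    have hts : s ≤ t + s := by linarith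
    rw [Real.norm_eq_abs, abs_of_nonneg (by positivity)]
    apply div_le_div_of_nonneg_left (by positivity) hs hts

lemma shift_eq (s : ℝ) (hs : 0 < s) :
    ∫ t in Ioi (0:ℝ), Real.exp (-t) / (t + s)
      = Real.exp s * ∫ u in Ioi s, Real.exp (-u) / u := by
  have key := (measurePreserving_add_right (volume : Measure ℝ) s).setIntegral_preimage_emb
      (measurableEmbedding_addRight s) (fun u => Real.exp (-u) / u) (Ioi s)
  have hpre : (· + s) ⁻¹' (Ioi s) = Ioi (0:ℝ) := by
    ext x; simp [mem_Ioi]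
  rw [hpre] at key
  have h2 : (fun t : ℝ => Real.exp (-(t+s))/(t+s))
      = fun t : ℝ => Real.exp (-s) * (Real.exp (-t)/(t+s)) := by
    funext t; rw [neg_add, Real.exp_add, mul_comm, mul_div_assoc]
  rw [h2] at key
  rw [integral_const_mul] at key
  rw [← key, ← mul_assoc, ← Real.exp_add]
  simp

theorem stmt5 (a b : ℝ) (ha : 0 < a) (hb : 0 < b) (hab : a ≠ b) :
    ∫ t in Set.Ioi (0 : ℝ), Real.exp (-t) / ((1 + t * a) * (1 + t * b)) =
      (F1 a - F1 b) / (a - b) := by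
  have hsa : (0:ℝ) < 1/a := by positivity
  have hsb : (0:ℝ) < 1/b := by positivity
  have hIa := integrable_shift (1/a) hsa
  have hIb := integrable_shift (1/b) hsb
  have hab' : a - b ≠ 0 := sub_ne_zero.mpr hab
  have hcong : ∫ t in Set.Ioi (0:ℝ), Real.exp (-t) / ((1 + t * a) * (1 + t * b))
      = ∫ t in Set.Ioi (0:ℝ),
          (a-b)⁻¹ * (Real.exp (-t)/(t + 1/a) - Real.exp (-t)/(t + 1/b)) := by
    apply setIntegral_congr_fun measurableSet_Ioi
    intro t ht
    have ht0 : (0:ℝ) < t := ht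
    have h1 : (0:ℝ) < 1 + t * a := by positivity
    have h2 : (0:ℝ) < 1 + t * b := by positivity
    have h3 : (0:ℝ) < t + 1/a := by positivity
    have h4 : (0:ℝ) < t + 1/b := by positivity
    field_simp
    ring
  rw [hcong, integral_const_mul, integral_sub hIa hIb, shift_eq _ hsa, shift_eq _ hsb]
  simp only [F1, expIntE1, div_eq_inv_mul, mul_one, one_div]
end
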